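/- Let X be a compact subset of ℝⁿ with extrinsic diameter D. Then X is contained in a closed ball of radius D / √(2(n+1)/n). In particular, if D < √(2(n+1)/n) then X is contained in a ball of radius strictly less than 1. -/

import Mathlib

open Metric Finset RealInnerProductSpace

variable {F : Type*} [NormedAddCommGroup F] [InnerProductSpace ℝ F] [FiniteDimensional ℝ F]

lemma jung_min_ball (s : Finset F) (hs : s.Nonempty) :
    ∃ c R, 0 ≤ R ∧ (∀ p ∈ s, dist p c ≤ R) ∧
      c ∈ convexHull ℝ (↑(s.filter (fun p => dist p c = R)) : Set F) := by
  classical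
  obtain ⟨p₀, hp₀⟩ := id hs
  set f : F → ℝ := fun c => s.sup' hs (fun p => dist p c) with hf
  have hfle : ∀ c, ∀ p ∈ s, dist p c ≤ f c := fun c p hp => Finset.le_sup' (fun p => dist p c) hp
  have hfc : Continuous f :=
    Continuous.finset_sup'_apply hs (fun p _ => continuous_const.dist continuous_id)
  have hL0 : 0 ≤ f p₀ := le_trans dist_nonneg (hfle p₀ p₀ hp₀)
  -- minimize over a big closed ball
  obtain ⟨c, hcK, hcmin⟩ := (isCompact_closedBall p₀ (f p₀)).exists_isMinOn
    (Metric.nonempty_closedBall.2 hL0) hfc.continuousOn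
  -- c is a global minimizer
  have hglob : ∀ y, f c ≤ f y := by
    intro y
    by_cases hy : y ∈ closedBall p₀ (f p₀)
    · exact hcmin hy
    · have h1 : f p₀ < dist p₀ y := by
        rw [← dist_comm y p₀]; simpa [Metric.mem_closedBall] using hy
      have := hfle y p₀ hp₀
      have hcp : f c ≤ f p₀ := hcmin (Metric.mem_closedBall_self hL0)
      linarith
  set R := f c with hR
  have hR0 : 0 ≤ R := le_trans dist_nonneg (hfle c p₀ hp₀)
  refine ⟨c, R, hR0, hfle c, ?_⟩
  set T := s.filter (fun p => dist p c = R) with hT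
  have hTne : (↑T : Set F).Nonempty := by
    obtain ⟨p, hp, hpe⟩ := Finset.exists_mem_eq_sup' hs (fun p => dist p c)
    exact ⟨p, by simp only [hT, Finset.coe_filter, Set.mem_setOf_eq]; exact ⟨hp, hpe.symm⟩⟩
  by_contra hc
  set H := convexHull ℝ (↑T : Set F) with hH
  have hHconv : Convex ℝ H := convex_convexHull _ _
  have hHcompact : IsCompact H := (T.finite_toSet).isCompact_convexHull ℝ
  obtain ⟨u, huH, hu⟩ := exists_norm_eq_iInf_of_complete_convex (hTne.convexHull)
    hHcompact.isComplete hHconv c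
  have hproj : ∀ w ∈ H, ⟪c - u, w - u⟫ ≤ 0 :=
    (norm_eq_iInf_iff_real_inner_le_zero hHconv huH).1 hu
  set d := u - c with hd
  have hdne : d ≠ 0 := by
    intro h
    apply hc
    have : u = c := by rwa [hd, sub_eq_zero] at h
    rwa [← this]
  have hdpos : (0:ℝ) < ‖d‖^2 := by
    have := norm_pos_iff.mpr hdne
    positivity
  -- key inner product bound for touching points
  have hkey : ∀ p ∈ T, ‖d‖^2 ≤ ⟪p - c, d⟫ := by
    intro p hp
    have hpH : p ∈ H := subset_convexHull _ _ (by exact_mod_cast hp)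
    have h1 : ⟪c - u, p - u⟫ ≤ 0 := hproj p hpH
    have h2 : p - c = (p - u) + d := by rw [hd]; abel
    have h3 : ⟪p - c, d⟫ = ⟪p - u, d⟫ + ‖d‖^2 := by
      rw [h2, inner_add_left, real_inner_self_eq_norm_sq]
    have h4 : ⟪p - u, d⟫ = -⟪c - u, p - u⟫ := by
      rw [hd, show u - c = -(c - u) from by abel, inner_neg_right, real_inner_comm]
    nlinarith [h1]
  -- eventually moving in direction d strictly decreases all distances
  have hev : ∀ p ∈ s, ∀ᶠ t in nhdsWithin (0:ℝ) (Set.Ioi 0),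
      dist p (c + t • d) < R := by
    intro p hp
    by_cases hpT : p ∈ T
    · have hip := hkey p hpT
      have hpR : dist p c = R := (Finset.mem_filter.1 hpT).2
      filter_upwards [self_mem_nhdsWithin,
        eventually_nhdsWithin_of_eventually_nhds
          (Filter.Tendsto.eventually_lt_const (show (0:ℝ) < 2 by norm_num) (continuous_id.tendsto (0:ℝ)))]
        with t ht ht2
      have ht0 : 0 < t := ht
      simp only [id] at ht2
      have hlt : dist p (c + t • d) ^ 2 < R ^ 2 := by
        have hexp : dist p (c + t • d) ^2 = ‖(p - c) - t • d‖^2 := by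
          rw [dist_eq_norm]
          congr 1
          congr 1
          abel
        rw [hexp, norm_sub_sq_real, real_inner_smul_right, norm_smul, Real.norm_eq_abs,
          abs_of_pos ht0, ← hpR, dist_eq_norm]
        have h6 : t * ‖d‖^2 ≤ t * ⟪p - c, d⟫ := mul_le_mul_of_nonneg_left hip ht0.le
        nlinarith [mul_pos ht0 hdpos]
      have h8 : 0 ≤ dist p (c + t • d) := dist_nonneg
      nlinarith
    · have hpR : dist p c < R := by
        refine lt_of_le_of_ne (hfle c p hp) ?_
        intro h; exact hpT (Finset.mem_filter.2 ⟨hp, h⟩)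
      have hcont : Filter.Tendsto (fun t : ℝ => dist p (c + t • d)) (nhds 0) (nhds (dist p c)) := by
        have : Continuous (fun t : ℝ => dist p (c + t • d)) := by
          apply continuous_const.dist
          exact continuous_const.add (continuous_id.smul continuous_const)
        simpa using this.tendsto 0
      exact eventually_nhdsWithin_of_eventually_nhds
        (Filter.Tendsto.eventually_lt_const hpR hcont)
  have hall : ∀ᶠ t in nhdsWithin (0:ℝ) (Set.Ioi 0), ∀ p ∈ s, dist p (c + t • d) < R :=
    (Finset.eventually_all s).2 hev
  obtain ⟨t, ht⟩ := hall.exists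
  have : f (c + t • d) < R := by
    rw [hf]
    exact (Finset.sup'_lt_iff hs).2 (fun p hp => ht p hp)
  exact absurd (hglob (c + t • d)) (by linarith)

lemma jung_calc (T : Finset F) (c : F) (R D : ℝ)
    (hdist : ∀ p ∈ T, dist p c = R)
    (hdiam : ∀ p ∈ T, ∀ q ∈ T, dist p q ≤ D)
    (hc : c ∈ convexHull ℝ (↑T : Set F)) (m : ℕ) (hcard : T.card ≤ m + 1) :
    2 * (m + 1 : ℝ) * R^2 ≤ m * D^2 := by
  classical
  rw [Finset.convexHull_eq] at hc
  obtain ⟨w, hw0, hw1, hwc⟩ := hc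
  have hTne : T.Nonempty := by
    by_contra h
    rw [Finset.not_nonempty_iff_eq_empty] at h
    simp [h] at hw1
  obtain ⟨q₀, hq₀⟩ := id hTne
  have hD0 : 0 ≤ D := le_trans dist_nonneg (hdiam q₀ hq₀ q₀ hq₀)
  have hR0 : 0 ≤ R := (hdist q₀ hq₀) ▸ dist_nonneg
  have hcm : ∑ p ∈ T, w p • p = c := by
    rw [Finset.centerMass_eq_of_sum_1 _ id hw1] at hwc
    simpa using hwc
  have hzero : ∑ p ∈ T, w p • (p - c) = 0 := by
    simp only [smul_sub]
    rw [Finset.sum_sub_distrib, hcm, ← Finset.sum_smul, hw1, one_smul, sub_self]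
  -- key identity
  have hkey : ∀ q ∈ T, ∑ p ∈ T, w p * ‖p - q‖^2 = 2 * R^2 := by
    intro q hq
    have hqR : ‖q - c‖ = R := by rw [← dist_eq_norm]; exact hdist q hq
    have hterm : ∀ p ∈ T, w p * ‖p - q‖^2 =
        w p * R^2 - 2 * ⟪w p • (p - c), q - c⟫ + w p * R^2 := by
      intro p hp
      have hpR : ‖p - c‖ = R := by rw [← dist_eq_norm]; exact hdist p hp
      have : p - q = (p - c) - (q - c) := by abel
      rw [this, norm_sub_sq_real, hpR, hqR, real_inner_smul_left]
      ring
    rw [Finset.sum_congr rfl hterm]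
    rw [Finset.sum_add_distrib, Finset.sum_sub_distrib, ← Finset.mul_sum,
      ← Finset.sum_mul, hw1]
    have : ∑ p ∈ T, ⟪w p • (p - c), q - c⟫ = ⟪∑ p ∈ T, w p • (p - c), q - c⟫ := by
      rw [sum_inner]
    rw [this, hzero, inner_zero_left]
    ring
  -- per-q bound
  have hbound : ∀ q ∈ T, 2 * R^2 ≤ (1 - w q) * D^2 := by
    intro q hq
    rw [← hkey q hq]
    have h1 : ∑ p ∈ T, w p * ‖p - q‖^2
        = ∑ p ∈ T.erase q, w p * ‖p - q‖^2 := by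
      rw [← Finset.add_sum_erase _ _ hq]
      simp
    rw [h1]
    have h2 : ∑ p ∈ T.erase q, w p * ‖p - q‖^2 ≤ ∑ p ∈ T.erase q, w p * D^2 := by
      apply Finset.sum_le_sum
      intro p hp
      have hpT := Finset.mem_of_mem_erase hp
      have : ‖p - q‖ ≤ D := by rw [← dist_eq_norm]; exact hdiam p hpT q hq
      have h3 : ‖p - q‖^2 ≤ D^2 := by nlinarith [norm_nonneg (p - q)]
      exact mul_le_mul_of_nonneg_left h3 (hw0 p hpT)
    have h4 : ∑ p ∈ T.erase q, w p = 1 - w q := by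
      have := Finset.add_sum_erase _ w hq
      rw [hw1] at this
      linarith
    calc ∑ p ∈ T.erase q, w p * ‖p - q‖^2 ≤ ∑ p ∈ T.erase q, w p * D^2 := h2
      _ = (1 - w q) * D^2 := by rw [← Finset.sum_mul, h4]
  -- combine with weights
  set S := ∑ q ∈ T, (w q)^2 with hS
  have hsum : 2 * R^2 ≤ (1 - S) * D^2 := by
    have := Finset.sum_le_sum (fun q hq => mul_le_mul_of_nonneg_left (hbound q hq) (hw0 q hq))
    rw [← Finset.sum_mul, hw1, one_mul] at this
    calc 2 * R^2 ≤ ∑ q ∈ T, w q * ((1 - w q) * D^2) := this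
      _ = (1 - S) * D^2 := by
          rw [hS]
          rw [Finset.sum_congr rfl (g := fun q => w q * D^2 - (w q)^2 * D^2)
            (fun q _ => by ring)]
          rw [Finset.sum_sub_distrib, ← Finset.sum_mul, ← Finset.sum_mul, hw1]
          ring
  have hcauchy : (1:ℝ) ≤ T.card * S := by
    have := sq_sum_le_card_mul_sum_sq (s := T) (f := w)
    rwa [hw1, one_pow] at this
  have hSnn : 0 ≤ S := Finset.sum_nonneg (fun q _ => sq_nonneg _)
  have hk : (T.card : ℝ) ≤ m + 1 := by exact_mod_cast hcard
  have hms : (1:ℝ) ≤ (m + 1) * S := le_trans hcauchy (mul_le_mul_of_nonneg_right hk hSnn)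
  nlinarith [sq_nonneg D, sq_nonneg R]

lemma jung_finset (s : Finset F) (hs : s.Nonempty) (D : ℝ) (m : ℕ) (hm : 0 < m)
    (hcard : s.card ≤ m + 1)
    (hdiam : ∀ p ∈ s, ∀ q ∈ s, dist p q ≤ D) :
    ∃ c, ∀ p ∈ s, dist p c ≤ D / Real.sqrt (2 * (m + 1) / m) := by
  obtain ⟨c, R, hR0, hle, hhull⟩ := jung_min_ball s hs
  obtain ⟨p₀, hp₀⟩ := id hs
  have hD0 : 0 ≤ D := le_trans dist_nonneg (hdiam p₀ hp₀ p₀ hp₀)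
  set T := s.filter (fun p => dist p c = R) with hT
  have hTsub : T ⊆ s := Finset.filter_subset _ _
  have hcalc : 2 * (m + 1 : ℝ) * R^2 ≤ m * D^2 :=
    jung_calc T c R D (fun p hp => (Finset.mem_filter.1 hp).2)
      (fun p hp q hq => hdiam p (hTsub hp) q (hTsub hq)) hhull m
      (le_trans (Finset.card_le_card hTsub) hcard)
  refine ⟨c, fun p hp => le_trans (hle p hp) ?_⟩
  have hm' : (0:ℝ) < m := by exact_mod_cast hm
  have harg : (0:ℝ) < 2 * (m + 1) / m := by positivity
  have hrpos : 0 ≤ D / Real.sqrt (2 * (m + 1) / m) := by positivity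
  have hR2 : R^2 ≤ (D / Real.sqrt (2 * (m + 1) / m))^2 := by
    rw [div_pow, Real.sq_sqrt harg.le]
    rw [le_div_iff₀ harg, mul_comm (R^2), div_mul_eq_mul_div, div_le_iff₀ hm']
    nlinarith
  calc R = Real.sqrt (R^2) := (Real.sqrt_sq hR0).symm
    _ ≤ Real.sqrt ((D / Real.sqrt (2 * (m + 1) / m))^2) := Real.sqrt_le_sqrt hR2
    _ = D / Real.sqrt (2 * (m + 1) / m) := Real.sqrt_sq hrpos

/-- Jung's theorem form: a compact X ⊂ ℝⁿ of extrinsic diameter D is contained in a closed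
ball of radius D / √(2(n+1)/n); in particular if D < √(2(n+1)/n) =: J_n then X lies in a
ball of radius strictly less than 1. -/
theorem stmt4 (n : ℕ) (hn : 0 < n) (X : Set (EuclideanSpace ℝ (Fin n)))
    (hX : IsCompact X) (D : ℝ) (hD : Metric.diam X = D) :
    (∃ c, X ⊆ Metric.closedBall c (D / Real.sqrt (2 * (n + 1) / n))) ∧
      (D < Real.sqrt (2 * (n + 1) / n) →
        ∃ c, ∃ ρ : ℝ, ρ < 1 ∧ X ⊆ Metric.closedBall c ρ) := by
  classical
  have hn' : (0:ℝ) < n := by exact_mod_cast hn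
  have harg : (0:ℝ) < 2 * (n + 1) / n := by positivity
  have hsq : 0 < Real.sqrt (2 * (n + 1) / n) := Real.sqrt_pos.2 harg
  set r := D / Real.sqrt (2 * (n + 1) / n) with hr
  have hmain : ∃ c, X ⊆ Metric.closedBall c r := by
    rcases X.eq_empty_or_nonempty with hXe | hXne
    · exact ⟨0, by simp [hXe]⟩
    · have hbd : Bornology.IsBounded X := hX.isBounded
      have hdiam : ∀ p ∈ X, ∀ q ∈ X, dist p q ≤ D := fun p hp q hq =>
        hD ▸ Metric.dist_le_diam_of_mem hbd hp hq
      have hfr : Module.finrank ℝ (EuclideanSpace ℝ (Fin n)) = n := by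
        simp [finrank_euclideanSpace]
      have hhelly : (⋂ x : X, Metric.closedBall (x : EuclideanSpace ℝ (Fin n)) r).Nonempty := by
        apply Convex.helly_theorem_compact' (𝕜 := ℝ)
          (fun x => convex_closedBall _ _) (fun x => isCompact_closedBall _ _)
        intro I hI
        rcases I.eq_empty_or_nonempty with hIe | hIne
        · refine ⟨0, ?_⟩
          simp [hIe]
        · set s : Finset (EuclideanSpace ℝ (Fin n)) := I.image Subtype.val with hs
          have hsne : s.Nonempty := hIne.image _
          have hscard : s.card ≤ n + 1 := by
            rw [hfr] at hI
            exact le_trans (Finset.card_image_le) hI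
          obtain ⟨c, hc⟩ := jung_finset s hsne D n hn hscard
            (fun p hp q hq => by
              rw [hs, Finset.mem_image] at hp hq
              obtain ⟨x, _, rfl⟩ := hp
              obtain ⟨y, _, rfl⟩ := hq
              exact hdiam _ x.2 _ y.2)
          refine ⟨c, ?_⟩
          simp only [Set.mem_iInter]
          intro x hx
          rw [Metric.mem_closedBall, dist_comm]
          exact hc _ (Finset.mem_image.2 ⟨x, hx, rfl⟩)
      obtain ⟨c, hc⟩ := hhelly
      refine ⟨c, fun x hx => ?_⟩
      rw [Set.mem_iInter] at hc
      have := hc ⟨x, hx⟩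
      rwa [Metric.mem_closedBall, dist_comm] at this
  refine ⟨hmain, fun hlt => ?_⟩
  obtain ⟨c, hc⟩ := hmain
  exact ⟨c, r, by rw [hr]; exact (div_lt_one hsq).2 hlt, hc⟩
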